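/- Let α be a flow on a Banach algebra B with ‖α_t‖ ≤ M·e^{ξ|t|}. For A ∈ B define f_n(z) = √(n/π)·∫_ℝ α_t(A)·e^{−n(t−z)² − ξ(t−z)} dt for z ∈ ℂ. Then f_n is well defined, f_n(s) = α_s(A_n) for all real s (where A_n = f_n(0)), and for every bounded linear functional η on B the function z ↦ η(f_n(z)) is entire. In particular each A_n is an analytic element for α. -/

import Mathlib

open Filter Topology MeasureTheory Real

lemma aux_integrable_quad (a c : ℝ) (ha : 0 < a) :
    Integrable fun u : ℝ => Real.exp (-a * u ^ 2 + c * u) := by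
  have h := (integrable_cexp_quadratic (b := (a : ℂ)) (by simpa using ha) (c : ℂ) 0).norm
  refine h.congr (Filter.Eventually.of_forall fun u => ?_)
  show ‖Complex.exp (-(a:ℂ) * (u:ℂ) ^ 2 + (c:ℂ) * (u:ℂ) + 0)‖ = Real.exp (-a * u ^ 2 + c * u)
  rw [show -(a:ℂ) * (u:ℂ) ^ 2 + (c:ℂ) * (u:ℂ) + 0 = ((-a * u ^ 2 + c * u : ℝ) : ℂ) by
    push_cast; ring]
  rw [Complex.norm_exp, Complex.ofReal_re]

lemma aux_integrable_abs (a c : ℝ) (ha : 0 < a) :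
    Integrable fun u : ℝ => Real.exp (-a * u ^ 2 + c * |u|) := by
  have h1 := aux_integrable_quad a c ha
  have h2 := aux_integrable_quad a (-c) ha
  have hc : Continuous fun u : ℝ => -a * u ^ 2 + c * |u| :=
    ((continuous_const.mul ((continuous_pow 2))).add (continuous_const.mul continuous_abs))
  refine Integrable.mono' (h1.add h2)
    (Real.continuous_exp.comp hc).aestronglyMeasurable
    (Filter.Eventually.of_forall fun u => ?_)
  rw [Real.norm_eq_abs, abs_of_nonneg (Real.exp_pos _).le]
  rcases abs_cases u with ⟨h, _⟩ | ⟨h, _⟩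
  · rw [h]
    exact le_add_of_nonneg_right (Real.exp_pos _).le
  · rw [h, show -a * u ^ 2 + c * -u = -a * u ^ 2 + -c * u by ring]
    exact le_add_of_nonneg_left (Real.exp_pos _).le

lemma aux_integrable_shift (a c x : ℝ) (ha : 0 < a) :
    Integrable fun t : ℝ => Real.exp (-a * (t - x) ^ 2 + c * |t - x|) :=
  (aux_integrable_abs a c ha).comp_sub_right x

set_option maxHeartbeats 1000000 in
/-- For a flow `α` with `‖α t‖ ≤ M e^{ξ|t|}` and `A ∈ B`,
the function `f_n(z) = √(n/π) ∫ α_t(A) e^{-n(t-z)² - ξ(t-z)} dt` is well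
defined (the integrand is Bochner integrable for every `z`), satisfies
`f_n(s) = α_s (f_n 0)` for real `s`, and `z ↦ η (f_n z)` is entire for every
bounded functional `η`.  In particular `A_n = f_n 0` is an analytic element
for `α`. -/
theorem gaussian_regularization_analytic
    {B : Type*} [NormedRing B] [NormedAlgebra ℂ B] [CompleteSpace B]
    (α : ℝ → B →L[ℂ] B)
    (hα_mul : ∀ t (x y : B), α t (x * y) = α t x * α t y)
    (hα_grp : ∀ s t (x : B), α (s + t) x = α s (α t x))
    (hα_zero : ∀ x : B, α 0 x = x)
    (hα_cont : ∀ x : B, Continuous fun t => α t x)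
    (M ξ : ℝ) (hM : 1 ≤ M) (hξ : 0 ≤ ξ)
    (hα_bdd : ∀ t : ℝ, ‖α t‖ ≤ M * Real.exp (ξ * |t|))
    (A : B) (n : ℕ) (hn : 1 ≤ n)
    (f : ℂ → B)
    (hf : ∀ z : ℂ, f z = Real.sqrt (n / π) •
      ∫ t : ℝ, Complex.exp (-(n : ℂ) * ((t : ℂ) - z) ^ 2
        - (ξ : ℂ) * ((t : ℂ) - z)) • α t A) :
    (∀ z : ℂ, Integrable fun t : ℝ =>
      Complex.exp (-(n : ℂ) * ((t : ℂ) - z) ^ 2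
        - (ξ : ℂ) * ((t : ℂ) - z)) • α t A) ∧
    (∀ s : ℝ, f s = α s (f 0)) ∧
    (∀ η : B →L[ℂ] ℂ, Differentiable ℂ fun z : ℂ => η (f z)) ∧
    (∃ g : ℂ → B, Differentiable ℂ g ∧ ∀ t : ℝ, g t = α t (f 0)) := by
  have hn' : (0:ℝ) < (n:ℝ) := by exact_mod_cast Nat.lt_of_lt_of_le Nat.zero_lt_one hn
  have hn1 : (1:ℝ) ≤ (n:ℝ) := by exact_mod_cast hn
  -- continuity of the integrand
  have hmeas : ∀ z : ℂ, Continuous fun t : ℝ =>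
      Complex.exp (-(n : ℂ) * ((t : ℂ) - z) ^ 2 - (ξ : ℂ) * ((t : ℂ) - z)) • α t A := by
    intro z
    exact (Complex.continuous_exp.comp (by fun_prop)).smul (hα_cont A)
  -- modulus of the exponential factor
  have habs : ∀ (z : ℂ) (t : ℝ),
      ‖Complex.exp (-(n : ℂ) * ((t : ℂ) - z) ^ 2 - (ξ : ℂ) * ((t : ℂ) - z))‖
        = Real.exp (-(n:ℝ) * (t - z.re) ^ 2 + (n:ℝ) * z.im ^ 2 - ξ * (t - z.re)) := by
    intro z t
    rw [Complex.norm_exp]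
    congr 1
    simp [Complex.sub_re, Complex.sub_im, Complex.mul_re, Complex.mul_im, pow_two]
    ring
  -- pointwise norm bound
  have hbd : ∀ (z : ℂ) (t : ℝ),
      ‖Complex.exp (-(n : ℂ) * ((t : ℂ) - z) ^ 2 - (ξ : ℂ) * ((t : ℂ) - z)) • α t A‖
        ≤ (M * ‖A‖ * Real.exp ((n:ℝ) * z.im ^ 2 + ξ * |z.re|)) *
            Real.exp (-(n:ℝ) * (t - z.re) ^ 2 + 2 * ξ * |t - z.re|) := by
    intro z t
    rw [norm_smul, habs]
    have h1 : ‖α t A‖ ≤ M * Real.exp (ξ * |t|) * ‖A‖ := by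
      calc ‖α t A‖ ≤ ‖α t‖ * ‖A‖ := (α t).le_opNorm A
        _ ≤ M * Real.exp (ξ * |t|) * ‖A‖ := by gcongr; exact hα_bdd t
    calc Real.exp (-(n:ℝ) * (t - z.re) ^ 2 + (n:ℝ) * z.im ^ 2 - ξ * (t - z.re)) * ‖α t A‖
        ≤ Real.exp (-(n:ℝ) * (t - z.re) ^ 2 + (n:ℝ) * z.im ^ 2 - ξ * (t - z.re)) *
            (M * Real.exp (ξ * |t|) * ‖A‖) :=
          mul_le_mul_of_nonneg_left h1 (Real.exp_pos _).le
      _ = (M * ‖A‖) * Real.exp ((-(n:ℝ) * (t - z.re) ^ 2 + (n:ℝ) * z.im ^ 2 - ξ * (t - z.re))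
            + ξ * |t|) := by rw [Real.exp_add]; ring
      _ ≤ (M * ‖A‖) * Real.exp (((n:ℝ) * z.im ^ 2 + ξ * |z.re|)
            + (-(n:ℝ) * (t - z.re) ^ 2 + 2 * ξ * |t - z.re|)) := by
          refine mul_le_mul_of_nonneg_left (Real.exp_le_exp.mpr ?_) (by positivity)
          have h2 : |t| ≤ |t - z.re| + |z.re| := by
            calc |t| = |(t - z.re) + z.re| := by ring_nf
              _ ≤ |t - z.re| + |z.re| := abs_add_le _ _
          have h3 : -(t - z.re) ≤ |t - z.re| := neg_le_abs _
          nlinarith [mul_le_mul_of_nonneg_left h2 hξ, mul_le_mul_of_nonneg_left h3 hξ]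
      _ = (M * ‖A‖ * Real.exp ((n:ℝ) * z.im ^ 2 + ξ * |z.re|)) *
            Real.exp (-(n:ℝ) * (t - z.re) ^ 2 + 2 * ξ * |t - z.re|) := by
          rw [Real.exp_add]; ring
  -- Part 1 : integrability
  have hInt : ∀ z : ℂ, Integrable fun t : ℝ =>
      Complex.exp (-(n : ℂ) * ((t : ℂ) - z) ^ 2 - (ξ : ℂ) * ((t : ℂ) - z)) • α t A := by
    intro z
    exact Integrable.mono'
      ((aux_integrable_shift (n:ℝ) (2*ξ) z.re hn').const_mul
        (M * ‖A‖ * Real.exp ((n:ℝ) * z.im ^ 2 + ξ * |z.re|)))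
      (hmeas z).aestronglyMeasurable
      (Filter.Eventually.of_forall fun t => hbd z t)
  -- Part 2 : group covariance
  have hgrp : ∀ s : ℝ, f s = α s (f 0) := by
    intro s
    rw [hf, hf, ContinuousLinearMap.map_smul_of_tower]
    congr 1
    rw [← ContinuousLinearMap.integral_comp_comm (α s) (hInt 0),
      ← integral_add_right_eq_self (fun t : ℝ =>
        Complex.exp (-(n : ℂ) * ((t : ℂ) - (s:ℂ)) ^ 2
          - (ξ : ℂ) * ((t : ℂ) - (s:ℂ))) • α t A) s]
    congr 1
    ext t
    have e1 : ((t + s : ℝ) : ℂ) - (s:ℂ) = (t:ℂ) := by push_cast; ring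
    rw [e1, add_comm t s, hα_grp s t A]
    simp only [sub_zero]
    rw [ContinuousLinearMap.map_smul]
  -- Part 3 : differentiability of f
  have hdiff : Differentiable ℂ f := by
    intro z₀
    set Y : ℝ := |z₀.im| + 1 with hY
    have hY0 : 0 ≤ Y := by positivity
    set c : ℝ := 2*(n:ℝ) + 2*ξ + 1 with hc
    set K : ℝ := (2*(n:ℝ)*(2+Y)+ξ) * (M * ‖A‖ * Real.exp ((n:ℝ)*Y^2 + ξ + ξ*|z₀.re|)) with hK
    have hderiv : ∀ (t : ℝ) (z : ℂ), HasDerivAt (fun z : ℂ =>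
        Complex.exp (-(n : ℂ) * ((t : ℂ) - z) ^ 2 - (ξ : ℂ) * ((t : ℂ) - z)) • α t A)
        (((2*(n:ℂ)*((t:ℂ)-z) + (ξ:ℂ)) *
          Complex.exp (-(n : ℂ) * ((t : ℂ) - z) ^ 2 - (ξ : ℂ) * ((t : ℂ) - z))) • α t A) z := by
      intro t z
      have h1 : HasDerivAt (fun z : ℂ => (t:ℂ) - z) (-1) z := by
        simpa using (hasDerivAt_id z).const_sub (t:ℂ)
      have h3 := ((h1.pow 2).const_mul (-(n:ℂ))).sub (h1.const_mul (ξ:ℂ))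
      have h4 := (h3.cexp).smul_const (α t A)
      convert h4 using 2
      · rfl
      · rfl
      · simp only [Pi.sub_apply, Pi.pow_apply]
        ring
    have hmeas' : ∀ z : ℂ, Continuous fun t : ℝ => ((2*(n:ℂ)*((t:ℂ)-z) + (ξ:ℂ)) *
        Complex.exp (-(n : ℂ) * ((t : ℂ) - z) ^ 2 - (ξ : ℂ) * ((t : ℂ) - z))) • α t A := by
      intro z
      exact ((by fun_prop : Continuous fun t : ℝ => (2*(n:ℂ)*((t:ℂ)-z) + (ξ:ℂ)) *
        Complex.exp (-(n : ℂ) * ((t : ℂ) - z) ^ 2 - (ξ : ℂ) * ((t : ℂ) - z)))).smul (hα_cont A)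
    -- the uniform bound on the derivative on the unit ball around z₀
    have h_bound : ∀ (t : ℝ), ∀ z ∈ Metric.ball z₀ 1,
        ‖(((2*(n:ℂ)*((t:ℂ)-z) + (ξ:ℂ)) *
          Complex.exp (-(n : ℂ) * ((t : ℂ) - z) ^ 2 - (ξ : ℂ) * ((t : ℂ) - z))) • α t A)‖
          ≤ K * Real.exp (-(n:ℝ) * (t - z₀.re) ^ 2 + c * |t - z₀.re|) := by
      intro t z hz
      have hdz : ‖z - z₀‖ < 1 := by
        rwa [Metric.mem_ball, Complex.dist_eq] at hz
      have hdre : |z.re - z₀.re| ≤ 1 := by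
        have := Complex.abs_re_le_norm (z - z₀)
        simp only [Complex.sub_re] at this
        linarith
      have hdim : |z.im| ≤ Y := by
        have h5 := Complex.abs_im_le_norm (z - z₀)
        simp only [Complex.sub_im] at h5
        have h6 : |z.im| - |z₀.im| ≤ |z.im - z₀.im| := abs_sub_abs_le_abs_sub _ _
        rw [hY]; linarith
      set u : ℝ := t - z₀.re with hu
      rw [norm_smul, norm_mul]
      have hP : ‖2*(n:ℂ)*((t:ℂ)-z) + (ξ:ℂ)‖ ≤ (2*(n:ℝ)*(2+Y)+ξ) * Real.exp |u| := by
        have habs_tz : ‖(t:ℂ) - z‖ ≤ (|u| + 1) + Y := by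
          refine (Complex.norm_le_abs_re_add_abs_im _).trans ?_
          simp only [Complex.sub_re, Complex.sub_im, Complex.ofReal_re, Complex.ofReal_im,
            zero_sub, abs_neg]
          have h7 : |t - z.re| ≤ |u| + |z₀.re - z.re| := by
            calc |t - z.re| = |u + (z₀.re - z.re)| := by rw [hu]; ring_nf
              _ ≤ |u| + |z₀.re - z.re| := abs_add_le _ _
          have h8 : |z₀.re - z.re| ≤ 1 := by rwa [abs_sub_comm]
          linarith
        have hstep : ‖2*(n:ℂ)*((t:ℂ)-z) + (ξ:ℂ)‖
            ≤ 2*(n:ℝ)*((|u| + 1) + Y) + ξ := by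
          calc ‖2*(n:ℂ)*((t:ℂ)-z) + (ξ:ℂ)‖
              ≤ ‖2*(n:ℂ)*((t:ℂ)-z)‖ + ‖(ξ:ℂ)‖ :=
                norm_add_le _ _
            _ = 2*(n:ℝ) * ‖(t:ℂ)-z‖ + |ξ| := by
                rw [norm_mul, Complex.norm_real, Real.norm_eq_abs, show (2:ℂ)*(n:ℂ) = (((2*(n:ℝ)):ℝ):ℂ) by
                  push_cast; ring, Complex.norm_real, Real.norm_eq_abs, abs_of_nonneg (by positivity)]
            _ ≤ 2*(n:ℝ)*((|u| + 1) + Y) + ξ := by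
                rw [abs_of_nonneg hξ]; gcongr
        refine hstep.trans ?_
        have he1 : |u| + 1 ≤ Real.exp |u| := Real.add_one_le_exp _
        have he2 : (1:ℝ) ≤ Real.exp |u| := Real.one_le_exp (abs_nonneg u)
        nlinarith [mul_le_mul_of_nonneg_left he1 (by positivity : (0:ℝ) ≤ 2*(n:ℝ)),
          mul_le_mul_of_nonneg_left he2 (by positivity : (0:ℝ) ≤ 2*(n:ℝ)*(1+Y)),
          mul_le_mul_of_nonneg_left he2 hξ]
      have hQ : ‖
          (Complex.exp (-(n : ℂ) * ((t : ℂ) - z) ^ 2 - (ξ : ℂ) * ((t : ℂ) - z)))‖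
          ≤ Real.exp (-(n:ℝ)*u^2 + (2*(n:ℝ)+ξ)*|u| + (n:ℝ)*Y^2 + ξ) := by
        rw [habs]
        apply Real.exp_le_exp.mpr
        set d : ℝ := z.re - z₀.re with hd
        have htx : t - z.re = u - d := by rw [hu, hd]; ring
        have hsq : (t - z.re)^2 ≥ u^2 - 2*|u| := by
          rw [htx]
          nlinarith [(le_abs_self (u*d)).trans (abs_mul u d).le, abs_nonneg u, abs_nonneg d,
            sq_nonneg d, hdre]
        have hlin : -(ξ * (t - z.re)) ≤ ξ*|u| + ξ := by
          rw [htx]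
          have : |u - d| ≤ |u| + |d| := abs_sub _ _
          nlinarith [neg_le_abs (u - d), mul_le_mul_of_nonneg_left (neg_le_abs (u-d)) hξ,
            mul_le_mul_of_nonneg_left this hξ, mul_le_mul_of_nonneg_left hdre hξ]
        have hy2 : z.im^2 ≤ Y^2 := by nlinarith [abs_nonneg z.im, sq_abs z.im]
        nlinarith [mul_le_mul_of_nonneg_left hsq (le_of_lt hn'),
          mul_le_mul_of_nonneg_left hy2 (le_of_lt hn')]
      have hR : ‖α t A‖ ≤ M * ‖A‖ * Real.exp (ξ*|u| + ξ*|z₀.re|) := by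
        have ht : |t| ≤ |u| + |z₀.re| := by
          calc |t| = |u + z₀.re| := by rw [hu]; ring_nf
            _ ≤ |u| + |z₀.re| := abs_add_le _ _
        calc ‖α t A‖ ≤ ‖α t‖ * ‖A‖ := (α t).le_opNorm A
          _ ≤ (M * Real.exp (ξ * |t|)) * ‖A‖ := by gcongr; exact hα_bdd t
          _ = M * ‖A‖ * Real.exp (ξ * |t|) := by ring
          _ ≤ M * ‖A‖ * Real.exp (ξ*|u| + ξ*|z₀.re|) := by
              refine mul_le_mul_of_nonneg_left (Real.exp_le_exp.mpr ?_) (by positivity)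
              nlinarith [mul_le_mul_of_nonneg_left ht hξ]
      calc ‖2*(n:ℂ)*((t:ℂ)-z) + (ξ:ℂ)‖ *
            ‖Complex.exp (-(n : ℂ) * ((t : ℂ) - z) ^ 2
              - (ξ : ℂ) * ((t : ℂ) - z))‖ * ‖α t A‖
          ≤ ((2*(n:ℝ)*(2+Y)+ξ) * Real.exp |u|) *
              Real.exp (-(n:ℝ)*u^2 + (2*(n:ℝ)+ξ)*|u| + (n:ℝ)*Y^2 + ξ) *
              (M * ‖A‖ * Real.exp (ξ*|u| + ξ*|z₀.re|)) := by gcongr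
        _ = ((2*(n:ℝ)*(2+Y)+ξ) * (M * ‖A‖)) *
              (Real.exp |u| * Real.exp (-(n:ℝ)*u^2 + (2*(n:ℝ)+ξ)*|u| + (n:ℝ)*Y^2 + ξ) *
                Real.exp (ξ*|u| + ξ*|z₀.re|)) := by ring
        _ = K * Real.exp (-(n:ℝ) * u ^ 2 + c * |u|) := by
            rw [← Real.exp_add, ← Real.exp_add, hK, hc]
            rw [show |u| + (-(n:ℝ)*u^2 + (2*(n:ℝ)+ξ)*|u| + (n:ℝ)*Y^2 + ξ) + (ξ*|u| + ξ*|z₀.re|)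
              = ((n:ℝ)*Y^2 + ξ + ξ*|z₀.re|) + (-(n:ℝ) * u ^ 2 + (2*(n:ℝ) + 2*ξ + 1) * |u|)
              by ring, Real.exp_add]
            ring
    have key := hasDerivAt_integral_of_dominated_loc_of_deriv_le (μ := volume)
      (F := fun (z : ℂ) (t : ℝ) =>
        Complex.exp (-(n : ℂ) * ((t : ℂ) - z) ^ 2 - (ξ : ℂ) * ((t : ℂ) - z)) • α t A)
      (F' := fun (z : ℂ) (t : ℝ) => ((2*(n:ℂ)*((t:ℂ)-z) + (ξ:ℂ)) *
        Complex.exp (-(n : ℂ) * ((t : ℂ) - z) ^ 2 - (ξ : ℂ) * ((t : ℂ) - z))) • α t A)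
      (x₀ := z₀)
      (bound := fun t => K * Real.exp (-(n:ℝ) * (t - z₀.re) ^ 2 + c * |t - z₀.re|))
      (Metric.ball_mem_nhds z₀ one_pos)
      (Filter.Eventually.of_forall fun z => (hmeas z).aestronglyMeasurable)
      (hInt z₀)
      (hmeas' z₀).aestronglyMeasurable
      (Filter.Eventually.of_forall h_bound)
      ((aux_integrable_shift (n:ℝ) c z₀.re hn').const_mul K)
      (Filter.Eventually.of_forall fun t z _ => hderiv t z)
    have hfe : f = fun z => Real.sqrt (n / π) •
        ∫ t : ℝ, Complex.exp (-(n : ℂ) * ((t : ℂ) - z) ^ 2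
          - (ξ : ℂ) * ((t : ℂ) - z)) • α t A := funext hf
    rw [hfe]
    exact ((key.2).const_smul (Real.sqrt (n / π))).differentiableAt
  exact ⟨hInt, hgrp, fun η => η.differentiable.comp hdiff, f, hdiff, hgrp⟩
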